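/- arXiv:2003.12933 — 5 statements merged into one kernel-verified Lean document; each statement's English description precedes it below -/
import Mathlib

section
/- Let β ≠ 0, L and K be real numbers with sin(βL) ≠ 0, and let Z : ℝ → ℝ be twice differentiable with Z''(z) = -β² Z(z) for all z and with Z'(0) = K and Z'(L) = K. Then for every z, Z(z) = (K/β)·(cos(β(L − z)) − cos(β z))/sin(βL). -/
/-- Solution of `Z'' = -β² Z` with Neumann boundary conditions `Z'(0) = Z'(L) = K`:
`Z(z) = (K/β) (cos(β(L - z)) - cos(βz)) / sin(βL)`. -/
theorem stmt_1 (β L K : ℝ) (hβ : β ≠ 0) (hsin : Real.sin (β * L) ≠ 0) (Z : ℝ → ℝ)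
    (hZ : Differentiable ℝ Z) (hZ' : Differentiable ℝ (deriv Z))
    (hODE : ∀ z, deriv (deriv Z) z = -β ^ 2 * Z z)
    (h0 : deriv Z 0 = K) (hL : deriv Z L = K) :
    ∀ z, Z z = (K / β) * (Real.cos (β * (L - z)) - Real.cos (β * z)) / Real.sin (β * L) := by
  have hb : ∀ x : ℝ, HasDerivAt (fun y : ℝ => β * y) β x := fun x => by
    simpa using (hasDerivAt_id x).const_mul β
  set g : ℝ → ℝ := fun x => β * Z x * Real.cos (β * x) - deriv Z x * Real.sin (β * x) with hg
  set h : ℝ → ℝ := fun x => β * Z x * Real.sin (β * x) + deriv Z x * Real.cos (β * x) with hh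
  have hgd : ∀ x, HasDerivAt g 0 x := by
    intro x
    have h1 := (((hZ x).hasDerivAt.const_mul β).mul (hb x).cos)
    have h2 := ((hZ' x).hasDerivAt.mul (hb x).sin)
    have h3 := h1.sub h2
    convert h3 using 1
    case e'_4 => rfl
    case e'_5 => rfl
    case e'_8 => rfl
    rw [hODE]
    ring
  have hhd : ∀ x, HasDerivAt h 0 x := by
    intro x
    have h1 := (((hZ x).hasDerivAt.const_mul β).mul (hb x).sin)
    have h2 := ((hZ' x).hasDerivAt.mul (hb x).cos)
    have h3 := h1.add h2
    convert h3 using 1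
    case e'_4 => rfl
    case e'_5 => rfl
    case e'_8 => rfl
    rw [hODE]
    ring
  have hgc : ∀ x y : ℝ, g x = g y := fun x y =>
    is_const_of_deriv_eq_zero (fun x => (hgd x).differentiableAt)
      (fun x => (hgd x).deriv) x y
  have hhc : ∀ x y : ℝ, h x = h y := fun x y =>
    is_const_of_deriv_eq_zero (fun x => (hhd x).differentiableAt)
      (fun x => (hhd x).deriv) x y
  intro z
  have e1 : β * Z z * Real.cos (β * z) - deriv Z z * Real.sin (β * z) = β * Z 0 := by
    simpa [hg, h0] using hgc z 0
  have e2 : β * Z z * Real.sin (β * z) + deriv Z z * Real.cos (β * z) = K := by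
    simpa [hh, h0] using hhc z 0
  have e1L : β * Z L * Real.cos (β * L) - K * Real.sin (β * L) = β * Z 0 := by
    simpa [hg, h0, hL] using hgc L 0
  have e2L : β * Z L * Real.sin (β * L) + K * Real.cos (β * L) = K := by
    simpa [hh, h0, hL] using hhc L 0
  have pyz := Real.sin_sq_add_cos_sq (β * z)
  have pyL := Real.sin_sq_add_cos_sq (β * L)
  have hcos : Real.cos (β * (L - z)) =
      Real.cos (β * L) * Real.cos (β * z) + Real.sin (β * L) * Real.sin (β * z) := by
    rw [mul_sub, Real.cos_sub]
  rw [hcos]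
  have hZz : β * Z z = β * Z 0 * Real.cos (β * z) + K * Real.sin (β * z) := by
    linear_combination Real.cos (β * z) * e1 + Real.sin (β * z) * e2 - β * Z z * pyz
  have hZ0 : β * Z 0 * Real.sin (β * L) = K * (Real.cos (β * L) - 1) := by
    linear_combination (-Real.sin (β * L)) * e1L + Real.cos (β * L) * e2L - K * pyL
  field_simp
  linear_combination Real.sin (β * L) * hZz + Real.cos (β * z) * hZ0
end

section
/- Let β ≠ 0, L and K be real numbers with sin(βL) ≠ 0, and let Z : ℝ → ℝ be twice differentiable with Z''(z) = -β² Z(z) for all z and with Z'(0) = K and Z'(L) = K. Then Z(L) = (K/β)·tan(βL/2). (Note that sin(βL) ≠ 0 forces cos(βL/2) ≠ 0, so the tangent is defined.) -/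
/-- Theorem 1 of the paper (boundary-value form): for a solution of `Z'' = -β² Z`
with `Z'(0) = Z'(L) = K` and `sin(βL) ≠ 0`, the surface value is
`Z(L) = (K/β) tan(βL/2)`. -/
theorem stmt_2 (β L K : ℝ) (hβ : β ≠ 0) (hsin : Real.sin (β * L) ≠ 0) (Z : ℝ → ℝ)
    (hZ : Differentiable ℝ Z) (hZ' : Differentiable ℝ (deriv Z))
    (hODE : ∀ z, deriv (deriv Z) z = -β ^ 2 * Z z)
    (h0 : deriv Z 0 = K) (hL : deriv Z L = K) :
    Z L = (K / β) * Real.tan (β * L / 2) := by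
  set A := Z 0 with hA
  set g : ℝ → ℝ := fun z => A * Real.cos (β * z) + (K / β) * Real.sin (β * z) with hg
  set g1 : ℝ → ℝ := fun z => -(A * β) * Real.sin (β * z) + K * Real.cos (β * z) with hg1
  have hbz : ∀ z : ℝ, HasDerivAt (fun z : ℝ => β * z) β z := by
    intro z
    simpa using (hasDerivAt_id z).const_mul β
  have hgd : ∀ z, HasDerivAt g (g1 z) z := by
    intro z
    have hc : HasDerivAt (fun z => Real.cos (β * z)) (-Real.sin (β * z) * β) z :=
      (Real.hasDerivAt_cos (β * z)).comp z (hbz z)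
    have hs : HasDerivAt (fun z => Real.sin (β * z)) (Real.cos (β * z) * β) z :=
      (Real.hasDerivAt_sin (β * z)).comp z (hbz z)
    have := (hc.const_mul A).add (hs.const_mul (K / β))
    refine this.congr_deriv ?_
    field_simp [hg1]
    ring
  have hg1d : ∀ z, HasDerivAt g1 (-β ^ 2 * g z) z := by
    intro z
    have hc : HasDerivAt (fun z => Real.cos (β * z)) (-Real.sin (β * z) * β) z :=
      (Real.hasDerivAt_cos (β * z)).comp z (hbz z)
    have hs : HasDerivAt (fun z => Real.sin (β * z)) (Real.cos (β * z) * β) z :=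
      (Real.hasDerivAt_sin (β * z)).comp z (hbz z)
    have := (hs.const_mul (-(A * β))).add (hc.const_mul K)
    refine this.congr_deriv ?_
    simp only [hg]
    field_simp
    ring
  -- energy function
  set E : ℝ → ℝ := fun z => (deriv Z z - g1 z) ^ 2 + β ^ 2 * (Z z - g z) ^ 2 with hE
  have hEd : ∀ z, HasDerivAt E 0 z := by
    intro z
    have hZd : HasDerivAt Z (deriv Z z) z := (hZ z).hasDerivAt
    have hZ'd : HasDerivAt (deriv Z) (-β ^ 2 * Z z) z := by
      have := (hZ' z).hasDerivAt
      rwa [hODE z] at this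
    have h1 : HasDerivAt (fun z => (deriv Z z - g1 z) ^ 2)
        (2 * (deriv Z z - g1 z) * ((-β ^ 2 * Z z) - (-β ^ 2 * g z))) z := by
      have := (hZ'd.sub (hg1d z)).pow 2
      refine this.congr_deriv ?_
      simp only [Pi.sub_apply]
      ring
    have h2 : HasDerivAt (fun z => β ^ 2 * (Z z - g z) ^ 2)
        (β ^ 2 * (2 * (Z z - g z) * (deriv Z z - g1 z))) z := by
      have := ((hZd.sub (hgd z)).pow 2).const_mul (β ^ 2)
      refine this.congr_deriv ?_
      simp only [Pi.sub_apply]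
      ring
    have := h1.add h2
    refine this.congr_deriv ?_
    ring
  have hEconst : ∀ x y : ℝ, E x = E y :=
    is_const_of_deriv_eq_zero (fun z => (hEd z).differentiableAt)
      (fun z => (hEd z).deriv)
  have hE0 : E 0 = 0 := by
    have hgz : g 0 = A := by simp [hg]
    have hg1z : g1 0 = K := by simp [hg1]
    simp [hE, hgz, hg1z, h0, hA]
  have hEL : E L = 0 := by rw [hEconst L 0, hE0]
  have hsq1 : (0:ℝ) ≤ (deriv Z L - g1 L) ^ 2 := sq_nonneg _
  have hsq2 : (0:ℝ) ≤ β ^ 2 * (Z L - g L) ^ 2 :=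
    mul_nonneg (sq_nonneg _) (sq_nonneg _)
  have hZL : Z L = g L := by
    have h2 : β ^ 2 * (Z L - g L) ^ 2 = 0 := by
      have : (deriv Z L - g1 L) ^ 2 + β ^ 2 * (Z L - g L) ^ 2 = 0 := hEL
      nlinarith
    have hβ2 : β ^ 2 ≠ 0 := pow_ne_zero _ hβ
    have := (mul_eq_zero.mp h2).resolve_left hβ2
    have := pow_eq_zero_iff (n := 2) (by norm_num) |>.mp this
    linarith
  have hELx : (deriv Z L - g1 L) ^ 2 + β ^ 2 * (Z L - g L) ^ 2 = 0 := hEL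
  have hder1 : deriv Z L = g1 L := by
    rw [hZL] at hELx
    simp at hELx
    linarith [hELx]
  have hg1L : g1 L = K := by rw [← hder1, hL]
  -- from hg1L : -(A*β) sin(βL) + K cos(βL) = K, solve for A
  set s := Real.sin (β * L / 2) with hs
  set c := Real.cos (β * L / 2) with hc
  have hsin2 : Real.sin (β * L) = 2 * s * c := by
    rw [hs, hc, ← Real.sin_two_mul]; ring_nf
  have hcos2 : Real.cos (β * L) = 2 * c ^ 2 - 1 := by
    rw [hc, ← Real.cos_two_mul]; ring_nf
  have hcne : c ≠ 0 := by
    intro h; rw [hsin2, h] at hsin; simp at hsin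
  have hsne : s ≠ 0 := by
    intro h; rw [hsin2, h] at hsin; simp at hsin
  have hsc : s ^ 2 + c ^ 2 = 1 := Real.sin_sq_add_cos_sq _
  have hAval : -(A * β) * Real.sin (β * L) + K * Real.cos (β * L) = K := hg1L
  rw [hsin2, hcos2] at hAval
  have h1 : -2 * A * β * s * c = 2 * K * s ^ 2 := by
    linear_combination hAval - 2 * K * hsc
  have h2 : s * (A * β * c + K * s) = 0 := by linear_combination (-1/2 : ℝ) * h1
  have hAβc : A * β * c = -(K * s) := by
    have := (mul_eq_zero.mp h2).resolve_left hsne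
    linarith
  have hgoal : Z L = A * Real.cos (β * L) + (K / β) * Real.sin (β * L) := hZL
  rw [Real.tan_eq_sin_div_cos, hgoal, ← hs, ← hc, hsin2, hcos2]
  field_simp
  linear_combination (2 * c ^ 2 - 1) * hAβc
end

section
/- Let β̂ ∈ ℂ with β̂ ≠ 0, let L be a real number with Complex.sin(β̂L) ≠ 0, let K ∈ ℂ, and let Z : ℝ → ℂ be twice differentiable with Z''(z) = -β̂² Z(z) for all z and with Z'(0) = K and Z'(L) = K. Then Z(L) = (K/β̂)·tan(β̂L/2) (complex tangent). -/
/-- Damped-film version (Theorem 2, exact core): for a complex wave number `β̂ ≠ 0`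
and a complex-valued solution `Z : ℝ → ℂ` of `Z'' = -β̂² Z` with
`Z'(0) = Z'(L) = K` and `sin(β̂L) ≠ 0`, one has `Z(L) = (K/β̂) tan(β̂L/2)`. -/
theorem stmt_3 (β : ℂ) (hβ : β ≠ 0) (L : ℝ) (K : ℂ)
    (hsin : Complex.sin (β * L) ≠ 0) (Z : ℝ → ℂ)
    (hZ : Differentiable ℝ Z) (hZ' : Differentiable ℝ (deriv Z))
    (hODE : ∀ z, deriv (deriv Z) z = -β ^ 2 * Z z)
    (h0 : deriv Z 0 = K) (hL : deriv Z L = K) :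
    Z L = (K / β) * Complex.tan (β * L / 2) := by
  -- auxiliary derivatives of sin(βz), cos(βz) as functions ℝ → ℂ
  have hs : ∀ z : ℝ, HasDerivAt (fun z : ℝ => Complex.sin (β * z))
      (Complex.cos (β * z) * β) z := by
    intro z
    have h1 : HasDerivAt (fun w : ℂ => Complex.sin (β * w)) (Complex.cos (β * z) * β) (z : ℂ) := by
      simpa [Function.comp_def] using (Complex.hasDerivAt_sin (β * z)).comp (z : ℂ)
        ((hasDerivAt_id (z : ℂ)).const_mul β)
    exact h1.comp_ofReal
  have hc : ∀ z : ℝ, HasDerivAt (fun z : ℝ => Complex.cos (β * z))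
      (-Complex.sin (β * z) * β) z := by
    intro z
    have h1 : HasDerivAt (fun w : ℂ => Complex.cos (β * w)) (-Complex.sin (β * z) * β) (z : ℂ) := by
      simpa [Function.comp_def] using (Complex.hasDerivAt_cos (β * z)).comp (z : ℂ)
        ((hasDerivAt_id (z : ℂ)).const_mul β)
    exact h1.comp_ofReal
  set G : ℝ → ℂ := fun z => β * Z z * Complex.sin (β * z) + deriv Z z * Complex.cos (β * z)
    with hGdef
  have hGd : ∀ z : ℝ, HasDerivAt G 0 z := by
    intro z
    have hZat : HasDerivAt Z (deriv Z z) z := (hZ z).hasDerivAt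
    have hZ'at : HasDerivAt (deriv Z) (-β ^ 2 * Z z) z := by
      have := (hZ' z).hasDerivAt
      rwa [hODE z] at this
    have h1 : HasDerivAt (fun z : ℝ => β * Z z * Complex.sin (β * z))
        ((β * deriv Z z) * Complex.sin (β * z) + (β * Z z) * (Complex.cos (β * z) * β)) z :=
      ((hZat.const_mul β).mul (hs z))
    have h2 : HasDerivAt (fun z : ℝ => deriv Z z * Complex.cos (β * z))
        ((-β ^ 2 * Z z) * Complex.cos (β * z) + deriv Z z * (-Complex.sin (β * z) * β)) z :=
      (hZ'at.mul (hc z))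
    have := h1.add h2
    exact this.congr_deriv (by ring)
  have hGconst : G L = G 0 := by
    have hdiff : Differentiable ℝ G := fun z => (hGd z).differentiableAt
    have hzero : ∀ z, deriv G z = 0 := fun z => (hGd z).deriv
    exact is_const_of_deriv_eq_zero hdiff hzero L 0
  have hG0 : G 0 = K := by
    simp [hGdef, h0]
  have hGL : β * Z L * Complex.sin (β * L) + K * Complex.cos (β * L) = K := by
    have := hGconst
    rw [hG0] at this
    simpa [hGdef, hL] using this
  -- half-angle algebra
  set θ : ℂ := β * L with hθ
  have hsin2 : Complex.sin θ = 2 * Complex.sin (θ / 2) * Complex.cos (θ / 2) := by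
    have := Complex.sin_two_mul (θ / 2)
    rw [show 2 * (θ / 2) = θ by ring] at this
    exact this
  have hcos2 : Complex.cos θ = 1 - 2 * Complex.sin (θ / 2) ^ 2 := by
    have hpyth := Complex.sin_sq_add_cos_sq (θ / 2)
    have h2 := Complex.cos_two_mul (θ / 2)
    rw [show 2 * (θ / 2) = θ by ring] at h2
    linear_combination h2 + 2 * hpyth
  have hshalf : Complex.sin (θ / 2) ≠ 0 := by
    intro h; apply hsin; rw [hsin2, h]; ring
  have hchalf : Complex.cos (θ / 2) ≠ 0 := by
    intro h; apply hsin; rw [hsin2, h]; ring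
  rw [Complex.tan_eq_sin_div_cos]
  have key : β * Z L * (2 * Complex.sin (θ / 2) * Complex.cos (θ / 2))
      = K * (2 * Complex.sin (θ / 2) ^ 2) := by
    have := hGL
    rw [hsin2, hcos2] at this
    linear_combination this
  field_simp
  have hs0 : Complex.sin (θ / 2) ≠ 0 := hshalf
  -- goal: Z L * (β * cos) = K * sin  (up to ordering)
  have : Z L * β * Complex.cos (θ / 2) = K * Complex.sin (θ / 2) := by
    apply mul_right_cancel₀ hshalf
    linear_combination key / 2
  linear_combination this
end

section
/- Let m, L, C, Γ_m, Γ_LC, G, Ω, ω_r be real numbers with m ≠ 0, L ≠ 0, C ≠ 0 and ω_r² = 1/(LC), and let δx, δp, δq, δφ, δV be complex numbers satisfying the frequency-domain equations: −iΩδx = δp/m; −iΩδp = −mω_r²δx − Γ_mδp − Gδq; −iΩδq = δφ/L; −iΩδφ = −δq/C − Γ_LCδφ − Gδx + δV. Define χ_m = 1/(m(ω_r² − Ω² − iΩΓ_m)) and χ_LC = 1/(L(ω_r² − Ω² − iΩΓ_LC)), assuming ω_r² − Ω² − iΩΓ_m ≠ 0, ω_r² − Ω² − iΩΓ_LC ≠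 0, and χ_m⁻¹ − G²χ_LC ≠ 0. Then |δx|² = |G·(χ_m⁻¹ − G²χ_LC)⁻¹·χ_LC|²·|δV|². -/
open Complex

/-- Theorem 5 (transfer function of the piezo-opto-electro-mechanical system):
the frequency-domain first-order perturbation equations imply
`|δx|² = |G (χ_m⁻¹ − G²χ_LC)⁻¹ χ_LC|² |δV|²`. -/
theorem stmt_9 (m L C Γm ΓLC G Ω ωr : ℝ)
    (hm : m ≠ 0) (hL : L ≠ 0) (hC : C ≠ 0) (hres : ωr ^ 2 = 1 / (L * C))
    (δx δp δq δφ δV : ℂ)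
    (h1 : -I * Ω * δx = δp / m)
    (h2 : -I * Ω * δp = -m * ωr ^ 2 * δx - Γm * δp - G * δq)
    (h3 : -I * Ω * δq = δφ / L)
    (h4 : -I * Ω * δφ = -δq / C - ΓLC * δφ - G * δx + δV)
    (χm χLC : ℂ)
    (hχm : χm = 1 / (m * ((ωr ^ 2 : ℂ) - Ω ^ 2 - I * Ω * Γm)))
    (hχLC : χLC = 1 / (L * ((ωr ^ 2 : ℂ) - Ω ^ 2 - I * Ω * ΓLC)))
    (hm0 : (ωr ^ 2 : ℂ) - Ω ^ 2 - I * Ω * Γm ≠ 0)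
    (hLC0 : (ωr ^ 2 : ℂ) - Ω ^ 2 - I * Ω * ΓLC ≠ 0)
    (heff : χm⁻¹ - G ^ 2 * χLC ≠ 0) :
    ‖δx‖ ^ 2 =
      ‖G * (χm⁻¹ - G ^ 2 * χLC)⁻¹ * χLC‖ ^ 2 * ‖δV‖ ^ 2 := by
  set A : ℂ := (ωr ^ 2 : ℂ) - Ω ^ 2 - I * Ω * Γm with hA
  set B : ℂ := (ωr ^ 2 : ℂ) - Ω ^ 2 - I * Ω * ΓLC with hB
  have hmC : (m : ℂ) ≠ 0 := by exact_mod_cast hm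
  have hLc : (L : ℂ) ≠ 0 := by exact_mod_cast hL
  have hCc : (C : ℂ) ≠ 0 := by exact_mod_cast hC
  have hresC : (ωr : ℂ) ^ 2 = 1 / (L * C) := by exact_mod_cast hres
  -- eliminate δp
  have hp : δp = -I * Ω * m * δx := by
    field_simp at h1; linear_combination -h1
  have hφ : δφ = -I * Ω * L * δq := by
    field_simp at h3; linear_combination -h3
  have hx : (m : ℂ) * A * δx = -G * δq := by
    rw [hp] at h2
    rw [hA]
    linear_combination h2 - ((m : ℂ) * (Ω : ℂ) ^ 2 * δx) * Complex.I_sq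
  have hq : (L : ℂ) * B * δq = δV - G * δx := by
    have hLB' : (L : ℂ) * B = 1 / C - L * Ω ^ 2 - I * Ω * L * ΓLC := by
      rw [hB, mul_sub, mul_sub, hresC]
      field_simp
    rw [hφ] at h4
    rw [hLB']
    linear_combination h4 - ((L : ℂ) * (Ω : ℂ) ^ 2 * δq) * Complex.I_sq
  -- key equation
  have hkey : ((m : ℂ) * A * L * B - G ^ 2) * δx = -G * δV := by
    have := congrArg (fun z => (L : ℂ) * B * z) hx
    rw [show (L:ℂ) * B * (-G * δq) = -G * ((L:ℂ) * B * δq) by ring, hq] at this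
    linear_combination this
  have hχminv : χm⁻¹ = (m : ℂ) * A := by
    rw [hχm, one_div, inv_inv]
  have hLB : (L : ℂ) * B ≠ 0 := mul_ne_zero hLc hLC0
  have hD : (m : ℂ) * A * L * B - G ^ 2 ≠ 0 := by
    intro h0
    apply heff
    rw [hχminv, hχLC]
    field_simp
    linear_combination h0
  have hδx : δx = -(G * (χm⁻¹ - G ^ 2 * χLC)⁻¹ * χLC) * δV := by
    rw [hχminv, hχLC]
    have : δx = -G * δV / ((m : ℂ) * A * L * B - G ^ 2) := by
      field_simp
      linear_combination hkey

    rw [this]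
    rw [show (m:ℂ) * A - G^2 * (1 / (L * B)) = ((m:ℂ) * A * L * B - G^2) / (L * B) by
      field_simp]
    field_simp
  rw [hδx]
  rw [neg_mul, norm_neg, norm_mul]
  ring
end

section
/- Let Γ > 0, Ω > 0 and α be real numbers with Γ ≠ 2Ω, let μ₁, μ₂ ∈ ℂ be the two distinct roots of μ² + Γμ + Ω² = 0 (so μ₁ + μ₂ = −Γ, μ₁μ₂ = Ω², μ₁ ≠ μ₂, and Re μ₁ < 0, Re μ₂ < 0), and let ω ∈ ℝ. Then ∫_{t ∈ ℝ} (α/(μ₁² − μ₂²))·((1/μ₁)e^{μ₁|t|} − (1/μ₂)e^{μ₂|t|})·e^{−iωt} dt = 2α/((Ω² − ω²)² + Γ²ω²). -/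
open Complex MeasureTheory Set Filter Topology

lemma myIntegrable_exp_Ioi (c : ℂ) (hc : c.re < 0) :
    IntegrableOn (fun t : ℝ => Complex.exp (c * t)) (Ioi 0) := by
  have h := exp_neg_integrableOn_Ioi 0 (b := -c.re) (by linarith)
  refine (h.mono' ?_ ?_)
  · exact (Complex.continuous_exp.comp
      (continuous_const.mul Complex.continuous_ofReal)).aestronglyMeasurable
  · filter_upwards with t
    simp [Complex.norm_exp]

lemma myIntegral_exp_Ioi (c : ℂ) (hc : c.re < 0) :
    ∫ t in Ioi (0:ℝ), Complex.exp (c * t) = -1 / c := by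
  have hc0 : c ≠ 0 := fun h => by simp [h] at hc
  have key : Tendsto (fun X : ℝ => ∫ t in (0:ℝ)..X, Complex.exp (c * t))
      atTop (𝓝 (∫ t in Ioi (0:ℝ), Complex.exp (c * t))) :=
    intervalIntegral_tendsto_integral_Ioi 0 (myIntegrable_exp_Ioi c hc) tendsto_id
  have eq1 : ∀ X : ℝ, ∫ t in (0:ℝ)..X, Complex.exp (c * t)
      = (Complex.exp (c * X) - 1) / c := by
    intro X
    rw [integral_exp_mul_complex hc0]
    simp
  simp only [eq1] at key
  have lim2 : Tendsto (fun X : ℝ => (Complex.exp (c * X) - 1) / c) atTop (𝓝 ((0 - 1)/c)) := by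
    refine Tendsto.div_const (Tendsto.sub_const ?_ 1) c
    rw [tendsto_zero_iff_norm_tendsto_zero]
    have : ∀ X : ℝ, ‖Complex.exp (c * X)‖ = Real.exp (c.re * X) := by
      intro X; simp [Complex.norm_exp]
    simp only [this]
    exact Real.tendsto_exp_atBot.comp (tendsto_id.const_mul_atTop_of_neg hc)
  have := tendsto_nhds_unique key lim2
  rw [this]; ring

lemma re_sub_I_mul (c : ℂ) (ω : ℝ) : (c - I * ω).re = c.re := by simp
lemma re_add_I_mul (c : ℂ) (ω : ℝ) : (c + I * ω).re = c.re := by simp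

lemma myIntegrableOn_Ioi (c : ℂ) (hc : c.re < 0) (ω : ℝ) :
    IntegrableOn (fun t : ℝ => Complex.exp (c * |t|) * Complex.exp (-I * ω * t)) (Ioi 0) := by
  refine (myIntegrable_exp_Ioi (c - I * ω) (by rw [re_sub_I_mul]; exact hc)).congr_fun
    (fun t ht => ?_) measurableSet_Ioi
  rw [abs_of_pos ht, ← Complex.exp_add]
  ring_nf

lemma myIntegrableOn_Iic (c : ℂ) (hc : c.re < 0) (ω : ℝ) :
    IntegrableOn (fun t : ℝ => Complex.exp (c * |t|) * Complex.exp (-I * ω * t)) (Iic 0) := by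
  rw [← Measure.map_neg_eq_self (volume : Measure ℝ)]
  have m : MeasurableEmbedding fun x : ℝ => -x := (Homeomorph.neg ℝ).measurableEmbedding
  rw [m.integrableOn_map_iff]
  simp_rw [Function.comp_def, neg_preimage, neg_Iic, neg_zero]
  rw [integrableOn_Ici_iff_integrableOn_Ioi]
  refine (myIntegrable_exp_Ioi (c + I * ω) (by rw [re_add_I_mul]; exact hc)).congr_fun
    (fun t ht => ?_) measurableSet_Ioi
  rw [abs_neg, abs_of_pos ht, ← Complex.exp_add]
  push_cast
  ring_nf

lemma myIntegrable_line (c : ℂ) (hc : c.re < 0) (ω : ℝ) :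
    Integrable (fun t : ℝ => Complex.exp (c * |t|) * Complex.exp (-I * ω * t)) := by
  rw [← integrableOn_univ, ← Iic_union_Ioi (a := (0:ℝ))]
  exact (myIntegrableOn_Iic c hc ω).union (myIntegrableOn_Ioi c hc ω)

lemma myIntegral_line (c : ℂ) (hc : c.re < 0) (ω : ℝ) :
    ∫ t : ℝ, Complex.exp (c * |t|) * Complex.exp (-I * ω * t)
      = -2 * c / (c ^ 2 + ω ^ 2) := by
  have h1 : c - I * ω ≠ 0 := fun h => by
    have := re_sub_I_mul c ω; rw [h] at this; simp at this; linarith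
  have h2 : c + I * ω ≠ 0 := fun h => by
    have := re_add_I_mul c ω; rw [h] at this; simp at this; linarith
  rw [← intervalIntegral.integral_Iic_add_Ioi (b := (0:ℝ)) (myIntegrableOn_Iic c hc ω) (myIntegrableOn_Ioi c hc ω)]
  have hIoi : ∫ t in Ioi (0:ℝ), Complex.exp (c * |t|) * Complex.exp (-I * ω * t)
      = -1 / (c - I * ω) := by
    rw [setIntegral_congr_fun measurableSet_Ioi (g := fun t : ℝ => Complex.exp ((c - I * ω) * t))
      (fun t ht => by rw [abs_of_pos ht, ← Complex.exp_add]; ring_nf)]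
    exact myIntegral_exp_Ioi _ (by rw [re_sub_I_mul]; exact hc)
  have hIic : ∫ t in Iic (0:ℝ), Complex.exp (c * |t|) * Complex.exp (-I * ω * t)
      = -1 / (c + I * ω) := by
    have := integral_comp_neg_Ioi (0:ℝ)
      (fun t : ℝ => Complex.exp (c * |t|) * Complex.exp (-I * ω * t))
    rw [neg_zero] at this
    rw [← this]
    rw [setIntegral_congr_fun measurableSet_Ioi (g := fun t : ℝ => Complex.exp ((c + I * ω) * t))
      (fun t ht => by
        rw [abs_neg, abs_of_pos ht, ← Complex.exp_add]; push_cast; ring_nf)]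
    exact myIntegral_exp_Ioi _ (by rw [re_add_I_mul]; exact hc)
  rw [hIoi, hIic]
  have key : (c - I * ω) * (c + I * ω) = c ^ 2 + (ω:ℂ) ^ 2 := by
    have h : (I:ℂ) ^ 2 = -1 := I_sq
    linear_combination (-(ω:ℂ)^2) * h
  rw [← key]
  field_simp
  ring

/-- Theorem 6 (film thermal noise power spectrum): Fourier transforming the
stationary correlation function of the white-noise–driven damped oscillator gives
`∫ (α/(μ₁²−μ₂²))((1/μ₁)e^{μ₁|t|} − (1/μ₂)e^{μ₂|t|}) e^{−iωt} dt
  = 2α/((Ω²−ω²)² + Γ²ω²)`. -/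
theorem stmt_13 (Γ Ω α : ℝ) (hΓ : 0 < Γ) (hΩ : 0 < Ω) (hne : Γ ≠ 2 * Ω)
    (μ₁ μ₂ : ℂ)
    (hroot₁ : μ₁ ^ 2 + Γ * μ₁ + Ω ^ 2 = 0)
    (hroot₂ : μ₂ ^ 2 + Γ * μ₂ + Ω ^ 2 = 0)
    (hμne : μ₁ ≠ μ₂)
    (hsum : μ₁ + μ₂ = -(Γ : ℂ)) (hprod : μ₁ * μ₂ = (Ω : ℂ) ^ 2)
    (hre₁ : μ₁.re < 0) (hre₂ : μ₂.re < 0)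
    (ω : ℝ) :
    ∫ t : ℝ, ((α : ℂ) / (μ₁ ^ 2 - μ₂ ^ 2)) *
        ((1 / μ₁) * Complex.exp (μ₁ * |t|) - (1 / μ₂) * Complex.exp (μ₂ * |t|)) *
        Complex.exp (-I * ω * t) =
      2 * α / (((Ω ^ 2 - ω ^ 2) ^ 2 + Γ ^ 2 * ω ^ 2 : ℝ) : ℂ) := by
  have hμ₁0 : μ₁ ≠ 0 := fun h => by rw [h] at hre₁; simp at hre₁
  have hμ₂0 : μ₂ ≠ 0 := fun h => by rw [h] at hre₂; simp at hre₂
  have hd1 : μ₁ ^ 2 + (ω:ℂ) ^ 2 ≠ 0 := by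
    intro h
    have h1 : (μ₁ - I * ω) * (μ₁ + I * ω) = 0 := by
      have : (I:ℂ) ^ 2 = -1 := I_sq
      linear_combination h - (ω:ℂ)^2 * this
    rcases mul_eq_zero.1 h1 with h2 | h2
    · have := re_sub_I_mul μ₁ ω; rw [h2] at this; simp at this; linarith
    · have := re_add_I_mul μ₁ ω; rw [h2] at this; simp at this; linarith
  have hd2 : μ₂ ^ 2 + (ω:ℂ) ^ 2 ≠ 0 := by
    intro h
    have h1 : (μ₂ - I * ω) * (μ₂ + I * ω) = 0 := by
      have : (I:ℂ) ^ 2 = -1 := I_sq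
      linear_combination h - (ω:ℂ)^2 * this
    rcases mul_eq_zero.1 h1 with h2 | h2
    · have := re_sub_I_mul μ₂ ω; rw [h2] at this; simp at this; linarith
    · have := re_add_I_mul μ₂ ω; rw [h2] at this; simp at this; linarith
  have hdiff : μ₁ ^ 2 - μ₂ ^ 2 ≠ 0 := by
    have hs : μ₁ + μ₂ ≠ 0 := by
      rw [hsum]
      simp only [ne_eq, neg_eq_zero, Complex.ofReal_eq_zero]
      exact ne_of_gt hΓ
    have : μ₁ ^ 2 - μ₂ ^ 2 = (μ₁ - μ₂) * (μ₁ + μ₂) := by ring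
    rw [this]
    exact mul_ne_zero (sub_ne_zero.2 hμne) hs
  -- rewrite integrand
  have heq : ∀ t : ℝ, ((α : ℂ) / (μ₁ ^ 2 - μ₂ ^ 2)) *
        ((1 / μ₁) * Complex.exp (μ₁ * |t|) - (1 / μ₂) * Complex.exp (μ₂ * |t|)) *
        Complex.exp (-I * ω * t)
      = ((α : ℂ) / (μ₁ ^ 2 - μ₂ ^ 2) / μ₁) * (Complex.exp (μ₁ * |t|) * Complex.exp (-I * ω * t))
        - ((α : ℂ) / (μ₁ ^ 2 - μ₂ ^ 2) / μ₂) * (Complex.exp (μ₂ * |t|) * Complex.exp (-I * ω * t)) := by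
    intro t; ring
  simp only [heq]
  rw [integral_sub ((myIntegrable_line μ₁ hre₁ ω).const_mul _)
      ((myIntegrable_line μ₂ hre₂ ω).const_mul _),
    integral_const_mul, integral_const_mul, myIntegral_line μ₁ hre₁ ω,
    myIntegral_line μ₂ hre₂ ω]
  have hden : (((Ω ^ 2 - ω ^ 2) ^ 2 + Γ ^ 2 * ω ^ 2 : ℝ) : ℂ)
      = (μ₁ ^ 2 + (ω:ℂ) ^ 2) * (μ₂ ^ 2 + (ω:ℂ) ^ 2) := by
    push_cast
    linear_combination (2*(ω:ℂ)^2 - μ₁ * μ₂ - (Ω:ℂ)^2) * hprod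
      - (ω:ℂ)^2 * (μ₁ + μ₂ - (Γ:ℂ)) * hsum
  have final : (α:ℂ) / (μ₁ ^ 2 - μ₂ ^ 2) / μ₁ * (-2 * μ₁ / (μ₁ ^ 2 + (ω:ℂ) ^ 2))
      - (α:ℂ) / (μ₁ ^ 2 - μ₂ ^ 2) / μ₂ * (-2 * μ₂ / (μ₂ ^ 2 + (ω:ℂ) ^ 2))
      = 2 * (α:ℂ) / ((μ₁ ^ 2 + (ω:ℂ) ^ 2) * (μ₂ ^ 2 + (ω:ℂ) ^ 2)) := by
    field_simp
    ring
  rw [hden, ← final]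
end
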